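/- Let 𝓕 be an ω-closed family of nonempty inductive subsets of ω containing [0). Every automorphism a of the semigroup B_ℤ^𝓕 satisfying a(0,0,[0)) = (0,0,[0)) is the identity map. -/

import Mathlib

/-- A subset of ω is inductive if `i ∈ F` implies `i+1 ∈ F`. -/
def SInd (F : Set ℕ) : Prop := ∀ i ∈ F, i + 1 ∈ F

/-- `-n + F = {k : k + n ∈ F}`. -/
def negShift (n : ℕ) (F : Set ℕ) : Set ℕ := {k : ℕ | k + n ∈ F}

/-- A family of subsets of ω is ω-closed. -/
def OmegaClosed (𝓕 : Set (Set ℕ)) : Prop :=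
  ∀ n : ℕ, ∀ F₁ ∈ 𝓕, ∀ F₂ ∈ 𝓕, F₁ ∩ negShift n F₂ ∈ 𝓕

/-- `m + F = {m + k : k ∈ F} ∩ ω` for `m : ℤ`. -/
def zshift (m : ℤ) (F : Set ℕ) : Set ℕ := {x : ℕ | ∃ k ∈ F, (x : ℤ) = m + k}

/-- The semigroup operation on `B_ℤ^𝓕 ⊆ ℤ × ℤ × Set ℕ`. -/
def BZFop (a b : ℤ × ℤ × Set ℕ) : ℤ × ℤ × Set ℕ :=
  if a.2.1 ≤ b.1 then
    (a.1 - a.2.1 + b.1, b.2.1, zshift (a.2.1 - b.1) a.2.2 ∩ b.2.2)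
  else
    (a.1, a.2.1 - b.1 + b.2.1, a.2.2 ∩ zshift (b.1 - a.2.1) b.2.2)

lemma zshift_Ici (m : ℤ) (p : ℕ) : zshift m (Set.Ici p) = Set.Ici (m + p).toNat := by
  ext x
  simp only [zshift, Set.mem_Ici, Set.mem_setOf_eq]
  constructor
  · rintro ⟨t, ht, hx⟩; omega
  · intro h
    exact ⟨(x - m).toNat, by omega, by omega⟩

lemma op_le (i j k l : ℤ) (p q : ℕ) (h : j ≤ k) :
    BZFop (i, j, Set.Ici p) (k, l, Set.Ici q)
      = (i - j + k, l, Set.Ici (max (j - k + p).toNat q)) := by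
  simp only [BZFop, if_pos h, zshift_Ici, Set.Ici_inter_Ici]

lemma op_gt (i j k l : ℤ) (p q : ℕ) (h : k < j) :
    BZFop (i, j, Set.Ici p) (k, l, Set.Ici q)
      = (i, j - k + l, Set.Ici (max p (k - j + q).toNat)) := by
  simp only [BZFop, if_neg (not_le.mpr h), zshift_Ici, Set.Ici_inter_Ici]

lemma Ici_nat_inj {a b : ℕ} (h : Set.Ici a = Set.Ici b) : a = b := by
  have h1 : a ∈ Set.Ici b := h ▸ Set.self_mem_Ici
  have h2 : b ∈ Set.Ici a := h.symm ▸ Set.self_mem_Ici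
  simp only [Set.mem_Ici] at h1 h2; omega

lemma triple_eq {i j i' j' : ℤ} {p p' : ℕ} (h1 : i = i') (h2 : j = j') (h3 : p = p') :
    ((i, j, Set.Ici p) : ℤ × ℤ × Set ℕ) = (i', j', Set.Ici p') := by
  subst h1; subst h2; subst h3; rfl

lemma ind_eq_Ici (F : Set ℕ) (hne : F.Nonempty) (hind : SInd F) : F = Set.Ici (sInf F) := by
  ext n
  simp only [Set.mem_Ici]
  constructor
  · exact fun hn => Nat.sInf_le hn
  · intro h
    exact Nat.le_induction (Nat.sInf_mem hne) (fun n _ hn => hind n hn) n h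

lemma zshift_nonpos (m : ℤ) (hm : m ≤ 0) (F : Set ℕ) :
    zshift m F = negShift (-m).toNat F := by
  ext x
  simp only [zshift, negShift, Set.mem_setOf_eq]
  constructor
  · rintro ⟨t, ht, hx⟩
    have : x + (-m).toNat = t := by omega
    rwa [this]
  · intro h
    exact ⟨x + (-m).toNat, h, by omega⟩

lemma op_mem (𝓕 : Set (Set ℕ)) (hcl : OmegaClosed 𝓕) {a b : ℤ × ℤ × Set ℕ}
    (ha : a.2.2 ∈ 𝓕) (hb : b.2.2 ∈ 𝓕) : (BZFop a b).2.2 ∈ 𝓕 := by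
  unfold BZFop
  split_ifs with h
  · show zshift (a.2.1 - b.1) a.2.2 ∩ b.2.2 ∈ 𝓕
    rw [zshift_nonpos _ (by omega), Set.inter_comm]
    exact hcl _ _ hb _ ha
  · show a.2.2 ∩ zshift (b.1 - a.2.1) b.2.2 ∈ 𝓕
    rw [zshift_nonpos _ (by omega)]
    exact hcl _ _ ha _ hb

def bzE : ℤ × ℤ × Set ℕ := ((0 : ℤ), (0 : ℤ), Set.Ici (0 : ℕ))
def bzC (m : ℤ) : ℤ × ℤ × Set ℕ := (0, m, Set.Ici 0)
def bzB (m : ℤ) : ℤ × ℤ × Set ℕ := (m, 0, Set.Ici 0)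
def bzf (m : ℤ) : ℤ × ℤ × Set ℕ := (m, m, Set.Ici 0)

lemma bzCB (m : ℤ) : BZFop (bzC m) (bzB m) = bzE := by
  simp only [bzC, bzB, bzE]
  rw [op_le 0 m m 0 0 0 le_rfl]
  exact triple_eq (by omega) rfl (by omega)

lemma bzBC (m : ℤ) : BZFop (bzB m) (bzC m) = bzf m := by
  simp only [bzB, bzC, bzf]
  rw [op_le m 0 0 m 0 0 le_rfl]
  exact triple_eq (by omega) rfl (by omega)

lemma bzeC (m : ℤ) : BZFop bzE (bzC m) = bzC m := by
  simp only [bzC, bzE]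
  rw [op_le 0 0 0 m 0 0 le_rfl]
  exact triple_eq (by omega) rfl (by omega)

lemma bzBe (m : ℤ) : BZFop (bzB m) bzE = bzB m := by
  simp only [bzB, bzE]
  rw [op_le m 0 0 0 0 0 le_rfl]
  exact triple_eq (by omega) rfl (by omega)

lemma bzCC (m : ℤ) : BZFop (bzC 1) (bzC m) = bzC (1 + m) := by
  simp only [bzC]
  rw [op_gt 0 1 0 m 0 0 (by omega)]
  exact triple_eq rfl (by omega) (by omega)

lemma pair_char (𝓕 : Set (Set ℕ)) (hmem : ∀ F ∈ 𝓕, F.Nonempty ∧ SInd F)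
    (x y : ℤ × ℤ × Set ℕ) (hx : x.2.2 ∈ 𝓕) (hy : y.2.2 ∈ 𝓕)
    (hxy : BZFop x y = bzE) (hex : BZFop bzE x = x) (hye : BZFop y bzE = y) :
    ∃ m, x = bzC m ∧ y = bzB m := by
  obtain ⟨k, l, G⟩ := x
  obtain ⟨k', l', G'⟩ := y
  obtain ⟨g, rfl⟩ : ∃ g, G = Set.Ici g := ⟨_, ind_eq_Ici G (hmem G hx).1 (hmem G hx).2⟩
  obtain ⟨g', rfl⟩ : ∃ g', G' = Set.Ici g' := ⟨_, ind_eq_Ici G' (hmem G' hy).1 (hmem G' hy).2⟩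
  have hk : 0 ≤ k := by
    by_contra hk
    push_neg at hk
    rw [show bzE = ((0:ℤ), (0:ℤ), Set.Ici (0:ℕ)) from rfl, op_gt 0 0 k l 0 g hk] at hex
    have := congrArg Prod.fst hex
    simp only at this
    omega
  have hl' : 0 ≤ l' := by
    by_contra h
    push_neg at h
    rw [show bzE = ((0:ℤ), (0:ℤ), Set.Ici (0:ℕ)) from rfl,
      op_le k' l' 0 0 g' 0 (by omega)] at hye
    have h1 := congrArg (fun z : ℤ × ℤ × Set ℕ => z.2.1) hye
    simp only at h1
    omega
  rcases le_or_gt l k' with hlk | hlk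
  · rw [op_le k l k' l' g g' hlk] at hxy
    simp only [bzE, Prod.mk.injEq] at hxy
    obtain ⟨h1, h2, h3⟩ := hxy
    have h3' := Ici_nat_inj h3
    refine ⟨l, ?_, ?_⟩
    · simp only [bzC]; exact triple_eq (by omega) rfl (by omega)
    · simp only [bzB]; exact triple_eq (by omega) (by omega) (by omega)
  · rw [op_gt k l k' l' g g' hlk] at hxy
    simp only [bzE, Prod.mk.injEq] at hxy
    obtain ⟨h1, h2, h3⟩ := hxy
    omega

lemma eps_fix (𝓕 : Set (Set ℕ)) (hcl : OmegaClosed 𝓕)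
    (hmem : ∀ F ∈ 𝓕, F.Nonempty ∧ SInd F) (h0 : Set.Ici (0 : ℕ) ∈ 𝓕)
    (φ : ℤ × ℤ × Set ℕ → ℤ × ℤ × Set ℕ)
    (hmaps : Set.MapsTo φ {a : ℤ × ℤ × Set ℕ | a.2.2 ∈ 𝓕} {a : ℤ × ℤ × Set ℕ | a.2.2 ∈ 𝓕})
    (hinj : Set.InjOn φ {a : ℤ × ℤ × Set ℕ | a.2.2 ∈ 𝓕})
    (hhom : ∀ a b : ℤ × ℤ × Set ℕ, a.2.2 ∈ 𝓕 → b.2.2 ∈ 𝓕 →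
      φ (BZFop a b) = BZFop (φ a) (φ b))
    (hffix : ∀ m : ℤ, φ (bzf m) = bzf m)
    (q : ℤ) (r : ℕ) (hr : Set.Ici r ∈ 𝓕) :
    φ (q, q, Set.Ici r) = (q, q, Set.Ici r) := by
  have hεdom : ((q, q, Set.Ici r) : ℤ × ℤ × Set ℕ).2.2 ∈ 𝓕 := hr
  have hfdom : ∀ m : ℤ, (bzf m).2.2 ∈ 𝓕 := fun m => h0
  have hmapsw : (φ (q, q, Set.Ici r)).2.2 ∈ 𝓕 := hmaps hεdom
  obtain ⟨a, b, G', hw⟩ : ∃ a b G', φ (q, q, Set.Ici r) = (a, b, G') := ⟨_, _, _, rfl⟩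
  rw [hw] at hmapsw
  obtain ⟨r', rfl⟩ : ∃ r', G' = Set.Ici r' :=
    ⟨_, ind_eq_Ici G' (hmem G' hmapsw).1 (hmem G' hmapsw).2⟩
  have hidem : BZFop (q, q, Set.Ici r) (q, q, Set.Ici r) = (q, q, Set.Ici r) := by
    rw [op_le q q q q r r le_rfl]
    exact triple_eq (by omega) rfl (by omega)
  have hid2 : BZFop (a, b, Set.Ici r') (a, b, Set.Ici r') = (a, b, Set.Ici r') := by
    rw [← hw, ← hhom _ _ hεdom hεdom, hidem]
  have hab : a = b := by
    rcases le_or_gt b a with h | h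
    · rw [op_le a b a b r' r' h] at hid2
      have := congrArg Prod.fst hid2
      simp only at this
      omega
    · rw [op_gt a b a b r' r' h] at hid2
      have := congrArg (fun z : ℤ × ℤ × Set ℕ => z.2.1) hid2
      simp only at this
      omega
  subst hab
  have haq : q ≤ a := by
    have h1 : BZFop (q, q, Set.Ici r) (bzf q) = (q, q, Set.Ici r) := by
      simp only [bzf]
      rw [op_le q q q q r 0 le_rfl]
      exact triple_eq (by omega) rfl (by omega)
    have h2 : BZFop (a, a, Set.Ici r') (bzf q) = (a, a, Set.Ici r') := by
      rw [← hw, ← hffix q, ← hhom _ _ hεdom (hfdom q), h1, hw]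
    rcases le_or_gt a q with h | h
    · simp only [bzf] at h2
      rw [op_le a a q q r' 0 h] at h2
      have := congrArg Prod.fst h2
      simp only at this
      omega
    · omega
  have haq' : a ≤ q := by
    have h1 : BZFop (a, a, Set.Ici r') (bzf a) = (a, a, Set.Ici r') := by
      simp only [bzf]
      rw [op_le a a a a r' 0 le_rfl]
      exact triple_eq (by omega) rfl (by omega)
    have h2 : φ (BZFop (q, q, Set.Ici r) (bzf a)) = φ (q, q, Set.Ici r) := by
      rw [hhom _ _ hεdom (hfdom a), hw, hffix a, h1]
    have h3 : BZFop (q, q, Set.Ici r) (bzf a) = (q, q, Set.Ici r) :=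
      hinj (op_mem 𝓕 hcl hεdom (hfdom a)) hεdom h2
    simp only [bzf] at h3
    rw [op_le q q a a r 0 haq] at h3
    have := congrArg Prod.fst h3
    simp only at this
    omega
  have haq2 : a = q := le_antisymm haq' haq
  subst haq2
  have hrr' : r' ≤ r := by
    have hr2 : BZFop (a, a, Set.Ici r) (bzf (a + r)) = bzf (a + r) := by
      simp only [bzf]
      rw [op_le a a (a + r) (a + r) r 0 (by omega)]
      exact triple_eq (by omega) rfl (by omega)
    have hr2' : BZFop (a, a, Set.Ici r') (bzf (a + r)) = bzf (a + r) := by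
      rw [← hw, ← hffix (a + (r:ℤ)), ← hhom _ _ hεdom (hfdom _), hr2]
    simp only [bzf] at hr2'
    rw [op_le a a (a + r) (a + r) r' 0 (by omega)] at hr2'
    have := congrArg (fun z : ℤ × ℤ × Set ℕ => z.2.2) hr2'
    simp only at this
    have := Ici_nat_inj this
    omega
  have hrr'' : r ≤ r' := by
    have hs1 : BZFop (a, a, Set.Ici r') (bzf (a + r')) = bzf (a + r') := by
      simp only [bzf]
      rw [op_le a a (a + r') (a + r') r' 0 (by omega)]
      exact triple_eq (by omega) rfl (by omega)
    have hs2 : φ (BZFop (a, a, Set.Ici r) (bzf (a + r'))) = φ (bzf (a + r')) := by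
      rw [hhom _ _ hεdom (hfdom (a + r')), hw, hffix, hs1]
    have hs3 : BZFop (a, a, Set.Ici r) (bzf (a + r')) = bzf (a + r') :=
      hinj (op_mem 𝓕 hcl hεdom (hfdom (a + r'))) (hfdom (a + r')) hs2
    simp only [bzf] at hs3
    rw [op_le a a (a + r') (a + r') r 0 (by omega)] at hs3
    have := congrArg (fun z : ℤ × ℤ × Set ℕ => z.2.2) hs3
    simp only at this
    have := Ici_nat_inj this
    omega
  rw [hw]
  exact triple_eq rfl rfl (by omega)


/-- Every `(0,0,[0))`-automorphism of the semigroup `B_ℤ^𝓕` is the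
identity map. -/
theorem stmt16 (𝓕 : Set (Set ℕ)) (hcl : OmegaClosed 𝓕)
    (hmem : ∀ F ∈ 𝓕, F.Nonempty ∧ SInd F) (h0 : Set.Ici (0 : ℕ) ∈ 𝓕)
    (φ : ℤ × ℤ × Set ℕ → ℤ × ℤ × Set ℕ)
    (hbij : Set.BijOn φ {a : ℤ × ℤ × Set ℕ | a.2.2 ∈ 𝓕}
      {a : ℤ × ℤ × Set ℕ | a.2.2 ∈ 𝓕})
    (hhom : ∀ a b : ℤ × ℤ × Set ℕ, a.2.2 ∈ 𝓕 → b.2.2 ∈ 𝓕 →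
      φ (BZFop a b) = BZFop (φ a) (φ b))
    (hfix : φ ((0 : ℤ), (0 : ℤ), Set.Ici (0 : ℕ)) =
      ((0 : ℤ), (0 : ℤ), Set.Ici (0 : ℕ))) :
    ∀ a : ℤ × ℤ × Set ℕ, a.2.2 ∈ 𝓕 → φ a = a := by
  have hmaps := hbij.1
  have hinj := hbij.2.1
  have hsurj := hbij.2.2
  have hE : (bzE).2.2 ∈ 𝓕 := h0
  have hCd : ∀ m : ℤ, (bzC m).2.2 ∈ 𝓕 := fun m => h0
  have hBd : ∀ m : ℤ, (bzB m).2.2 ∈ 𝓕 := fun m => h0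
  have hfd : ∀ m : ℤ, (bzf m).2.2 ∈ 𝓕 := fun m => h0
  have hfe : φ bzE = bzE := hfix
  have hpair : ∀ m : ℤ, ∃ m', φ (bzC m) = bzC m' ∧ φ (bzB m) = bzB m' := by
    intro m
    apply pair_char 𝓕 hmem _ _ (hmaps (hCd m)) (hmaps (hBd m))
    · rw [← hhom _ _ (hCd m) (hBd m), bzCB, hfe]
    · rw [← hfe, ← hhom _ _ hE (hCd m), bzeC]
    · rw [← hfe, ← hhom _ _ (hBd m) hE, bzBe]
  choose t htC htB using hpair
  have ht0 : t 0 = 0 := by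
    have h1 : bzC (t 0) = bzC 0 := by rw [← htC 0, show bzC 0 = bzE from rfl, hfe]
    have h2 := congrArg (fun z : ℤ × ℤ × Set ℕ => z.2.1) h1
    simpa [bzC] using h2
  have htinj : ∀ m m' : ℤ, t m = t m' → m = m' := by
    intro m m' h
    have h1 : φ (bzC m) = φ (bzC m') := by rw [htC, htC, h]
    have h2 := hinj (hCd m) (hCd m') h1
    have h3 := congrArg (fun z : ℤ × ℤ × Set ℕ => z.2.1) h2
    simpa [bzC] using h3
  have ht1pos : 0 < t 1 := by
    rcases lt_trichotomy (t 1) 0 with h | h | h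
    · exfalso
      have h1 : BZFop (bzC (t 1)) (bzC (t 0)) = bzC (t (1 + 0)) := by
        rw [← htC 1, ← htC 0, ← htC (1 + 0), ← hhom _ _ (hCd 1) (hCd 0), bzCC 0]
      rw [ht0] at h1
      simp only [bzC] at h1
      rw [op_le 0 (t 1) 0 0 0 0 (le_of_lt h)] at h1
      have h2 := congrArg Prod.fst h1
      simp only at h2
      omega
    · exact absurd (htinj 1 0 (by omega)) one_ne_zero
    · exact h
  have htadd : ∀ m : ℤ, t (1 + m) = t 1 + t m := by
    intro m
    have h1 : BZFop (bzC (t 1)) (bzC (t m)) = bzC (t (1 + m)) := by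
      rw [← htC 1, ← htC m, ← htC (1 + m), ← hhom _ _ (hCd 1) (hCd m), bzCC m]
    simp only [bzC] at h1
    rw [op_gt 0 (t 1) 0 (t m) 0 0 ht1pos] at h1
    have h2 := congrArg (fun z : ℤ × ℤ × Set ℕ => z.2.1) h1
    simp only at h2
    omega
  have htmul : ∀ m : ℤ, t m = m * t 1 := by
    intro m
    induction m using Int.induction_on with
    | zero => simpa using ht0
    | succ n ih =>
      rw [show ((n : ℤ) + 1) = 1 + (n : ℤ) by ring, htadd n, ih]; ring
    | pred n ih =>
      have h := htadd (-(n : ℤ) - 1)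
      rw [show (1 + (-(n : ℤ) - 1)) = -(n : ℤ) by ring, ih] at h
      have : t (-(n : ℤ) - 1) = (-(n : ℤ) - 1) * t 1 := by linarith
      simpa using this
  have ht1 : t 1 = 1 := by
    obtain ⟨u, hu, huφ⟩ := hsurj (show bzC 1 ∈ {a : ℤ × ℤ × Set ℕ | a.2.2 ∈ 𝓕} from hCd 1)
    obtain ⟨v, hv, hvφ⟩ := hsurj (show bzB 1 ∈ {a : ℤ × ℤ × Set ℕ | a.2.2 ∈ 𝓕} from hBd 1)
    have huv : BZFop u v = bzE := by
      apply hinj (op_mem 𝓕 hcl hu hv) hE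
      rw [hhom _ _ hu hv, huφ, hvφ, bzCB, hfe]
    have heu : BZFop bzE u = u := by
      apply hinj (op_mem 𝓕 hcl hE hu) hu
      rw [hhom _ _ hE hu, hfe, huφ, bzeC]
    have hve : BZFop v bzE = v := by
      apply hinj (op_mem 𝓕 hcl hv hE) hv
      rw [hhom _ _ hv hE, hfe, hvφ, bzBe]
    obtain ⟨m, hum, hvm⟩ := pair_char 𝓕 hmem u v hu hv huv heu hve
    have h1 : bzC (t m) = bzC 1 := by rw [← htC, ← hum, huφ]
    have htm := congrArg (fun z : ℤ × ℤ × Set ℕ => z.2.1) h1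
    simp only [bzC] at htm
    have hmm : m * t 1 = 1 := by rw [← htmul m]; exact htm
    exact Int.eq_one_of_mul_eq_one_right (by omega) (by rw [mul_comm]; exact hmm)
  have hCfix : ∀ m : ℤ, φ (bzC m) = bzC m := fun m => by rw [htC, htmul, ht1, mul_one]
  have hBfix : ∀ m : ℤ, φ (bzB m) = bzB m := fun m => by rw [htB, htmul, ht1, mul_one]
  have hffix : ∀ m : ℤ, φ (bzf m) = bzf m := by
    intro m
    rw [← bzBC m, hhom _ _ (hBd m) (hCd m), hBfix, hCfix, bzBC]
  rintro ⟨i, j, F⟩ hF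
  obtain ⟨p, rfl⟩ : ∃ p, F = Set.Ici p := ⟨_, ind_eq_Ici F (hmem F hF).1 (hmem F hF).2⟩
  have hx : BZFop ((0 : ℤ), (0 : ℤ), Set.Ici p) (bzC j) = ((0 : ℤ), j, Set.Ici p) := by
    simp only [bzC]
    rw [op_le 0 0 0 j p 0 le_rfl]
    exact triple_eq (by omega) rfl (by omega)
  have hy : BZFop (bzB i) ((0 : ℤ), j, Set.Ici p) = (i, j, Set.Ici p) := by
    simp only [bzB]
    rw [op_le i 0 0 j 0 p le_rfl]
    exact triple_eq (by omega) rfl (by omega)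
  have hpd : (((0 : ℤ), (0 : ℤ), Set.Ici p) : ℤ × ℤ × Set ℕ).2.2 ∈ 𝓕 := hF
  have hxd : (((0 : ℤ), j, Set.Ici p) : ℤ × ℤ × Set ℕ).2.2 ∈ 𝓕 := hF
  calc φ (i, j, Set.Ici p) = φ (BZFop (bzB i) ((0 : ℤ), j, Set.Ici p)) := by rw [hy]
    _ = BZFop (φ (bzB i)) (φ ((0 : ℤ), j, Set.Ici p)) := hhom _ _ (hBd i) hxd
    _ = BZFop (bzB i) (φ (BZFop ((0 : ℤ), (0 : ℤ), Set.Ici p) (bzC j))) := by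
        rw [hBfix, hx]
    _ = BZFop (bzB i) (BZFop (φ ((0 : ℤ), (0 : ℤ), Set.Ici p)) (φ (bzC j))) := by
        rw [hhom _ _ hpd (hCd j)]
    _ = BZFop (bzB i) (BZFop ((0 : ℤ), (0 : ℤ), Set.Ici p) (bzC j)) := by
        rw [eps_fix 𝓕 hcl hmem h0 φ hmaps hinj hhom hffix 0 p hpd, hCfix]
    _ = (i, j, Set.Ici p) := by rw [hx, hy]
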